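/- If F is a distribution function on ℝ in the class L_γ for some γ > 0 (i.e. F̄(x) > 0 for all x and F̄(x−k)/F̄(x) → e^{γk} as x → ∞ for every fixed k), and if the moment generating function φ_F(γ) = E[e^{γX}] is finite, then F̄(x) = o(e^{−γx}) as x → ∞. -/

import Mathlib

open MeasureTheory Filter Set

/-- The tail distribution function of a probability measure on ℝ. -/
noncomputable def tail (μ : Measure ℝ) (x : ℝ) : ℝ := (μ (Set.Ioi x)).toReal

/-- The exponential moment `φ_F(α) = ∫ e^{αx} dF(x)`, valued in `[0,∞]`. -/
noncomputable def expMoment (μ : Measure ℝ) (α : ℝ) : ENNReal :=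
  ∫⁻ x, ENNReal.ofReal (Real.exp (α * x)) ∂μ

/-- The class `L_γ`: positive tail, and `F̄(x-k)/F̄(x) → e^{γ k}` for every fixed `k`. -/
def MemL (μ : Measure ℝ) (γ : ℝ) : Prop :=
  (∀ x, 0 < tail μ x) ∧
  ∀ k : ℝ, Tendsto (fun x => tail μ (x - k) / tail μ x) atTop (nhds (Real.exp (γ * k)))

theorem tail_littleO_exp (μ : Measure ℝ) [IsProbabilityMeasure μ] (γ : ℝ) (hγ : 0 < γ)
    (hL : MemL μ γ) (hφ : expMoment μ γ < ⊤) :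
    (fun x => tail μ x) =o[atTop] fun x => Real.exp (-γ * x) := by
  have hmeas : Measurable fun t : ℝ => ENNReal.ofReal (Real.exp (γ * t)) :=
    (Real.measurable_exp.comp (measurable_const.mul measurable_id)).ennreal_ofReal
  set ν := μ.withDensity (fun t => ENNReal.ofReal (Real.exp (γ * t))) with hν
  have hνuniv : ν univ = expMoment μ γ := by
    rw [hν, withDensity_apply _ MeasurableSet.univ, Measure.restrict_univ]; rfl
  have hνfin : ν univ ≠ ⊤ := by rw [hνuniv]; exact hφ.ne
  -- ν (Ioi x) → 0
  have hIoi : ∀ x : ℝ, ν (Ioi x) = ν univ - ν (Iic x) := by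
    intro x
    rw [← compl_Iic, measure_compl measurableSet_Iic (ne_top_of_le_ne_top hνfin (measure_mono (subset_univ _)))]
  have htend : Tendsto (fun x => ν (Ioi x)) atTop (nhds 0) := by
    have h1 : Tendsto (fun x => ν univ - ν (Iic x)) atTop (nhds (ν univ - ν univ)) :=
      ENNReal.Tendsto.sub tendsto_const_nhds (tendsto_measure_Iic_atTop ν) (Or.inl hνfin)
    simpa [hIoi, tsub_self] using h1
  have htendR : Tendsto (fun x => (ν (Ioi x)).toReal) atTop (nhds 0) := by
    simpa [Function.comp_def] using (ENNReal.tendsto_toReal (by simp)).comp htend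
  -- key bound : tail μ x * exp (γ x) ≤ (ν (Ioi x)).toReal
  have hbound : ∀ x : ℝ, tail μ x * Real.exp (γ * x) ≤ (ν (Ioi x)).toReal := by
    intro x
    have h1 : ENNReal.ofReal (Real.exp (γ * x)) * μ (Ioi x) ≤ ν (Ioi x) := by
      rw [hν, withDensity_apply _ measurableSet_Ioi]
      calc ENNReal.ofReal (Real.exp (γ * x)) * μ (Ioi x)
          = ∫⁻ t in Ioi x, ENNReal.ofReal (Real.exp (γ * x)) ∂μ := by
            rw [setLIntegral_const]
        _ ≤ ∫⁻ t in Ioi x, ENNReal.ofReal (Real.exp (γ * t)) ∂μ := by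
            refine setLIntegral_mono hmeas fun t ht => ?_
            exact ENNReal.ofReal_le_ofReal (Real.exp_le_exp.2
              (mul_le_mul_of_nonneg_left (le_of_lt ht) hγ.le))
    have h2 : (ENNReal.ofReal (Real.exp (γ * x)) * μ (Ioi x)).toReal ≤ (ν (Ioi x)).toReal :=
      ENNReal.toReal_mono (ne_top_of_le_ne_top hνfin (measure_mono (subset_univ _))) h1
    calc tail μ x * Real.exp (γ * x)
        = (ENNReal.ofReal (Real.exp (γ * x)) * μ (Ioi x)).toReal := by
          rw [ENNReal.toReal_mul, ENNReal.toReal_ofReal (Real.exp_pos _).le, tail, mul_comm]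
      _ ≤ (ν (Ioi x)).toReal := h2
  rw [Asymptotics.isLittleO_iff_tendsto fun x hx => ((Real.exp_pos _).ne' hx).elim]
  have heq : ∀ x : ℝ, tail μ x / Real.exp (-γ * x) = tail μ x * Real.exp (γ * x) := by
    intro x
    simp [neg_mul, Real.exp_neg, div_eq_mul_inv, inv_inv]
  simp only [heq]
  exact squeeze_zero (fun x => mul_nonneg ENNReal.toReal_nonneg (Real.exp_pos _).le)
    hbound htendR
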